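/- Let r⁺, r⁻ satisfy the partial cocycle identities (CCI⁺), (CCI⁻) and the balance identity (Bal). Then for all configurations γ⁺, γ⁻ ⊆ X, all disjoint finite configurations η₁⁺, η₂⁺, and every finite configuration η⁻: R(γ⁺, γ⁻, η₁⁺ ∪ η₂⁺, η⁻) = R(γ⁺∪η₂⁺, γ⁻, η₁⁺, η⁻)·R⁺(γ⁺, γ⁻, η₂⁺). -/

import Mathlib

open scoped NNReal

/-- Iterated product of the partial relative energy density `r⁺` along an
enumeration (list) of a finite configuration. -/
def RplusL {X : Type*} (rp : Set X → Set X → X → ℝ≥0) (γm : Set X) :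
    Set X → List X → ℝ≥0
  | _, [] => 1
  | γp, x :: xs => rp γp γm x * RplusL rp γm (insert x γp) xs

/-- `R⁺(γ⁺, γ⁻, η⁺)`: the iterated product of `r⁺` along a (fixed, arbitrary)
duplicate-free enumeration of the finite configuration `η⁺`; under (CCI⁺) it is
independent of the enumeration. -/
noncomputable def Rplus {X : Type*} (rp : Set X → Set X → X → ℝ≥0)
    (γp γm : Set X) (η : Finset X) : ℝ≥0 :=
  RplusL rp γm γp η.toList

/-- Iterated product of the partial relative energy density `r⁻` along an
enumeration (list) of a finite configuration. -/
def RminusL {X : Type*} (rm : Set X → Set X → X → ℝ≥0) (γp : Set X) :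
    Set X → List X → ℝ≥0
  | _, [] => 1
  | γm, y :: ys => rm γp γm y * RminusL rm γp (insert y γm) ys

/-- `R⁻(γ⁺, γ⁻, η⁻)`: the iterated product of `r⁻` along a (fixed, arbitrary)
duplicate-free enumeration of the finite configuration `η⁻`; under (CCI⁻) it is
independent of the enumeration. -/
noncomputable def Rminus {X : Type*} (rm : Set X → Set X → X → ℝ≥0)
    (γp γm : Set X) (η : Finset X) : ℝ≥0 :=
  RminusL rm γp γm η.toList

/-- `R(γ⁺, γ⁻, η⁺, η⁻) := R⁺(γ⁺, γ⁻∪η⁻, η⁺)·R⁻(γ⁺, γ⁻, η⁻)`. -/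
noncomputable def Rfull {X : Type*} (rp rm : Set X → Set X → X → ℝ≥0)
    (γp γm : Set X) (ηp ηm : Finset X) : ℝ≥0 :=
  Rplus rp γp (γm ∪ ↑ηm) ηp * Rminus rm γp γm ηm

section Aux
variable {X : Type*}

lemma foldl_insert_set (l : List X) : ∀ γ : Set X,
    l.foldl (fun s x => insert x s) γ = γ ∪ {x | x ∈ l} := by
  induction l with
  | nil => intro γ; simp
  | cons x xs ih =>
      intro γ
      simp only [List.foldl_cons, ih]
      ext z
      simp [or_comm, or_assoc, or_left_comm]

lemma foldl_insert_finset [DecidableEq X] (η : Finset X) (γ : Set X) :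
    η.toList.foldl (fun s x => insert x s) γ = γ ∪ ↑η := by
  rw [foldl_insert_set]
  congr 1
  ext z
  simp

lemma RplusL_append (rp : Set X → Set X → X → ℝ≥0) (γm : Set X) :
    ∀ (l₁ l₂ : List X) (γp : Set X),
      RplusL rp γm γp (l₁ ++ l₂)
        = RplusL rp γm γp l₁ * RplusL rp γm (l₁.foldl (fun s x => insert x s) γp) l₂ := by
  intro l₁
  induction l₁ with
  | nil => intro l₂ γp; simp [RplusL]
  | cons x xs ih => intro l₂ γp; simp [RplusL, ih, mul_assoc]

lemma RplusL_perm (rp : Set X → Set X → X → ℝ≥0)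
    (hCCIp : ∀ (γp γm : Set X) (x x' : X),
      rp (insert x' γp) γm x * rp γp γm x' = rp (insert x γp) γm x' * rp γp γm x)
    (γm : Set X) :
    ∀ {l l' : List X}, l.Perm l' → ∀ γp : Set X,
      RplusL rp γm γp l = RplusL rp γm γp l' := by
  intro l l' h
  induction h with
  | nil => intro γp; rfl
  | cons x _ ih => intro γp; simp [RplusL, ih]
  | swap x y l => intro γp
                  simp only [RplusL]
                  rw [Set.insert_comm, ← mul_assoc, ← mul_assoc,
                      mul_comm (rp γp γm y), mul_comm (rp γp γm x), hCCIp]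
  | trans _ _ ih1 ih2 => intro γp; rw [ih1, ih2]

lemma BalL (rp rm : Set X → Set X → X → ℝ≥0)
    (hBal : ∀ (γp γm : Set X) (x y : X),
      rp γp (insert y γm) x * rm γp γm y = rm (insert x γp) γm y * rp γp γm x) :
    ∀ (lm : List X) (γm γp : Set X) (x : X),
      rp γp (lm.foldl (fun s y => insert y s) γm) x * RminusL rm γp γm lm
        = RminusL rm (insert x γp) γm lm * rp γp γm x := by
  intro lm
  induction lm with
  | nil => intro γm γp x; simp [RminusL]
  | cons y ys ih =>
      intro γm γp x
      simp only [RminusL, List.foldl_cons]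
      calc rp γp (ys.foldl (fun s y => insert y s) (insert y γm)) x
              * (rm γp γm y * RminusL rm γp (insert y γm) ys)
          = rm γp γm y * (rp γp (ys.foldl (fun s y => insert y s) (insert y γm)) x
              * RminusL rm γp (insert y γm) ys) := by ring
        _ = rm γp γm y * (RminusL rm (insert x γp) (insert y γm) ys
              * rp γp (insert y γm) x) := by rw [ih]
        _ = RminusL rm (insert x γp) (insert y γm) ys
              * (rp γp (insert y γm) x * rm γp γm y) := by ring
        _ = RminusL rm (insert x γp) (insert y γm) ys
              * (rm (insert x γp) γm y * rp γp γm x) := by rw [hBal]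
        _ = rm (insert x γp) γm y * RminusL rm (insert x γp) (insert y γm) ys
              * rp γp γm x := by ring

lemma BalLL (rp rm : Set X → Set X → X → ℝ≥0)
    (hBal : ∀ (γp γm : Set X) (x y : X),
      rp γp (insert y γm) x * rm γp γm y = rm (insert x γp) γm y * rp γp γm x)
    (lm : List X) :
    ∀ (lp : List X) (γp γm : Set X),
      RplusL rp (lm.foldl (fun s y => insert y s) γm) γp lp * RminusL rm γp γm lm
        = RminusL rm (lp.foldl (fun s x => insert x s) γp) γm lm
            * RplusL rp γm γp lp := by
  intro lp
  induction lp with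
  | nil => intro γp γm; simp [RplusL]
  | cons x xs ih =>
      intro γp γm
      simp only [RplusL, List.foldl_cons]
      set M := lm.foldl (fun s y => insert y s) γm with hM
      calc rp γp M x * RplusL rp M (insert x γp) xs * RminusL rm γp γm lm
          = RplusL rp M (insert x γp) xs * (rp γp M x * RminusL rm γp γm lm) := by ring
        _ = RplusL rp M (insert x γp) xs
              * (RminusL rm (insert x γp) γm lm * rp γp γm x) := by
              rw [BalL rp rm hBal lm γm γp x]
        _ = (RplusL rp M (insert x γp) xs * RminusL rm (insert x γp) γm lm)
              * rp γp γm x := by ring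
        _ = (RminusL rm (xs.foldl (fun s x => insert x s) (insert x γp)) γm lm
              * RplusL rp γm (insert x γp) xs) * rp γp γm x := by rw [ih]
        _ = RminusL rm (xs.foldl (fun s x => insert x s) (insert x γp)) γm lm
              * (rp γp γm x * RplusL rp γm (insert x γp) xs) := by ring

end Aux

/-- Under (CCI⁺), (CCI⁻) and the balance identity (Bal), for all configurations
`γ⁺, γ⁻`, all disjoint finite configurations `η₁⁺, η₂⁺` and every finite
configuration `η⁻`:
`R(γ⁺, γ⁻, η₁⁺ ∪ η₂⁺, η⁻) = R(γ⁺∪η₂⁺, γ⁻, η₁⁺, η⁻)·R⁺(γ⁺, γ⁻, η₂⁺)`. -/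
theorem R_union_plus {X : Type*} [DecidableEq X]
    (rp rm : Set X → Set X → X → ℝ≥0)
    (hCCIp : ∀ (γp γm : Set X) (x x' : X),
      rp (insert x' γp) γm x * rp γp γm x' = rp (insert x γp) γm x' * rp γp γm x)
    (hCCIm : ∀ (γp γm : Set X) (y y' : X),
      rm γp (insert y' γm) y * rm γp γm y' = rm γp (insert y γm) y' * rm γp γm y)
    (hBal : ∀ (γp γm : Set X) (x y : X),
      rp γp (insert y γm) x * rm γp γm y = rm (insert x γp) γm y * rp γp γm x)
    (γp γm : Set X) (η₁ η₂ ηm : Finset X) (hdisj : Disjoint η₁ η₂) :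
    Rfull rp rm γp γm (η₁ ∪ η₂) ηm
      = Rfull rp rm (γp ∪ ↑η₂) γm η₁ ηm * Rplus rp γp γm η₂ := by
  classical
  have hperm : ((η₁ ∪ η₂).toList).Perm (η₂.toList ++ η₁.toList) := by
    apply List.perm_of_nodup_nodup_toFinset_eq (Finset.nodup_toList _)
    · rw [List.nodup_append]
      refine ⟨Finset.nodup_toList _, Finset.nodup_toList _, ?_⟩
      rintro a ha _ hb rfl
      exact Finset.disjoint_left.mp hdisj.symm
        (Finset.mem_toList.mp ha) (Finset.mem_toList.mp hb)
    · simp [Finset.union_comm]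
  have hsplit : Rplus rp γp (γm ∪ ↑ηm) (η₁ ∪ η₂)
      = Rplus rp γp (γm ∪ ↑ηm) η₂ * Rplus rp (γp ∪ ↑η₂) (γm ∪ ↑ηm) η₁ := by
    unfold Rplus
    rw [RplusL_perm rp hCCIp _ hperm, RplusL_append, foldl_insert_finset]
  have hbal : Rplus rp γp (γm ∪ ↑ηm) η₂ * Rminus rm γp γm ηm
      = Rminus rm (γp ∪ ↑η₂) γm ηm * Rplus rp γp γm η₂ := by
    unfold Rplus Rminus
    have := BalLL rp rm hBal ηm.toList η₂.toList γp γm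
    rwa [foldl_insert_finset, foldl_insert_finset] at this
  unfold Rfull
  rw [hsplit]
  calc Rplus rp γp (γm ∪ ↑ηm) η₂ * Rplus rp (γp ∪ ↑η₂) (γm ∪ ↑ηm) η₁
        * Rminus rm γp γm ηm
      = Rplus rp (γp ∪ ↑η₂) (γm ∪ ↑ηm) η₁
        * (Rplus rp γp (γm ∪ ↑ηm) η₂ * Rminus rm γp γm ηm) := by ring
    _ = Rplus rp (γp ∪ ↑η₂) (γm ∪ ↑ηm) η₁
        * (Rminus rm (γp ∪ ↑η₂) γm ηm * Rplus rp γp γm η₂) := by rw [hbal]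
    _ = Rplus rp (γp ∪ ↑η₂) (γm ∪ ↑ηm) η₁ * Rminus rm (γp ∪ ↑η₂) γm ηm
        * Rplus rp γp γm η₂ := by ring
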